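/- Let n be a positive integer and let f(t) = a_0 + a_1 t + ⋯ + a_{n+2} t^{n+2} be a polynomial with complex coefficients of degree at most n+2. Then for every complex number λ with λ ∉ {0, 1, 2, ..., n}, one has ∑_{k=0}^{n} C(n,k) (-1)^k f(k)/(k-λ) = f(λ) · ∑_{k=0}^{n} C(n,k) (-1)^k/(k-λ) + (-1)^n n! ( a_{n+1} + a_{n+2} ( n(n+1)/2 + λ ) ). -/

import Mathlib

open Finset Nat

open Polynomial

noncomputable def Sm (n m : ℕ) : ℂ := ∑ k ∈ Finset.range (n+1), (-1)^k * (n.choose k : ℂ) * (k:ℂ)^m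

lemma Sm_rec (n m : ℕ) : Sm (n+1) m = -∑ i ∈ Finset.range m, (m.choose i : ℂ) * Sm n i := by
  have h1 : Sm (n+1) m = Sm n m - ∑ j ∈ Finset.range (n+1), (-1)^j * (n.choose j : ℂ) * ((j:ℂ)+1)^m := by
    unfold Sm
    rw [Finset.sum_range_succ' (fun k => (-1:ℂ)^k * ((n+1).choose k : ℂ) * (k:ℂ)^m)]
    have h2 : ∀ i, ((n+1).choose (i+1) : ℂ) = (n.choose i : ℂ) + (n.choose (i+1) : ℂ) := by
      intro i; rw [Nat.choose_succ_succ]; push_cast; ring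
    simp only [h2]
    have h3 : ∀ i : ℕ, (-1:ℂ)^(i+1) * ((n.choose i : ℂ) + (n.choose (i+1) : ℂ)) * ((i:ℂ)+1)^m
        = -((-1:ℂ)^i * (n.choose i : ℂ) * ((i:ℂ)+1)^m) + (-1:ℂ)^(i+1) * (n.choose (i+1) : ℂ) * ((i+1:ℕ):ℂ)^m := by
      intro i; push_cast; ring
    push_cast
    simp only [h3]
    rw [Finset.sum_add_distrib, Finset.sum_neg_distrib]
    have h4 : ∑ i ∈ Finset.range (n+1), (-1:ℂ)^(i+1) * (n.choose (i+1) : ℂ) * ((i+1:ℕ):ℂ)^m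
        + (-1:ℂ)^0 * ((n+1).choose 0 : ℂ) * ((0:ℕ):ℂ)^m
        = ∑ k ∈ Finset.range (n+1), (-1:ℂ)^k * (n.choose k : ℂ) * (k:ℂ)^m := by
      have := (Finset.sum_range_succ' (fun k => (-1:ℂ)^k * (n.choose k : ℂ) * (k:ℂ)^m) (n+1)).symm
      simp only [Nat.choose_zero_right, Nat.cast_one] at this ⊢
      rw [this, Finset.sum_range_succ]
      simp [Nat.choose_succ_self]
    push_cast at h4 ⊢
    linear_combination h4
  have h5 : ∀ j : ℕ, ((j:ℂ)+1)^m = ∑ i ∈ Finset.range (m+1), (j:ℂ)^i * (m.choose i : ℂ) := by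
    intro j
    rw [add_pow]
    simp
  rw [h1]
  have h6 : ∑ j ∈ Finset.range (n+1), (-1:ℂ)^j * (n.choose j : ℂ) * ((j:ℂ)+1)^m
      = ∑ i ∈ Finset.range (m+1), (m.choose i : ℂ) * Sm n i := by
    simp only [h5, Finset.mul_sum]
    rw [Finset.sum_comm]
    unfold Sm
    congr 1; ext i
    rw [Finset.mul_sum]
    congr 1; ext j; ring
  rw [h6, Finset.sum_range_succ]
  simp

lemma Sm_lt : ∀ n m, m < n → Sm n m = 0 := by
  intro n
  induction n with
  | zero => intro m h; omega
  | succ n ih =>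
    intro m h
    rw [Sm_rec]
    rw [Finset.sum_eq_zero, neg_zero]
    intro i hi
    rw [ih i (by simp at hi; omega), mul_zero]

lemma Sm_self (n : ℕ) : Sm n n = (-1)^n * (n ! : ℂ) := by
  induction n with
  | zero => simp [Sm]
  | succ n ih =>
    rw [Sm_rec, Finset.sum_range_succ, Finset.sum_eq_zero (fun i hi => by
      rw [Sm_lt n i (by simp at hi; omega), mul_zero]), zero_add, ih]
    rw [Nat.choose_succ_self_right]
    push_cast [Nat.factorial_succ]
    ring

lemma Sm_succ_self (n : ℕ) : Sm n (n+1) = (-1)^n * (n ! : ℂ) * ((n:ℂ) * (n+1) / 2) := by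
  induction n with
  | zero => simp [Sm]
  | succ n ih =>
    rw [Sm_rec, Finset.sum_range_succ, Finset.sum_range_succ,
      Finset.sum_eq_zero (fun i hi => by
        rw [Sm_lt n i (by simp at hi; omega), mul_zero]), zero_add, ih, Sm_self]
    rw [Nat.choose_succ_self_right]
    have hs : (n+2).choose n = (n+2).choose 2 := by
      have := Nat.choose_symm (show 2 ≤ n + 2 by omega)
      simpa using this
    have ht : (n+2).choose 2 * 2 = (n+2)*(n+1) := by
      rw [Nat.choose_two_right]
      have h2 : 2 ∣ (n+2)*(n+1) := by
        rw [mul_comm]; exact (Nat.even_mul_succ_self (n+1)).two_dvd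
      calc (n+2)*(n+2-1)/2*2 = (n+2)*(n+1)/2*2 := by norm_num
        _ = (n+2)*(n+1) := Nat.div_mul_cancel h2
    have hc : ((n+2).choose n : ℂ) * 2 = ((n:ℂ)+2)*((n:ℂ)+1) := by
      rw [hs]; exact_mod_cast congrArg (Nat.cast : ℕ → ℂ) ht
    have : ((n+2).choose n : ℂ) = ((n:ℂ)+2)*((n:ℂ)+1)/2 := by
      field_simp; linear_combination hc
    rw [this]
    push_cast [Nat.factorial_succ]
    ring

lemma key_sum (n : ℕ) (p : Polynomial ℂ) (hp : p.natDegree ≤ n + 1) :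
    ∑ k ∈ Finset.range (n+1), (-1)^k * (n.choose k : ℂ) * p.eval (k:ℂ)
      = (-1)^n * (n ! : ℂ) * (p.coeff n + p.coeff (n+1) * ((n:ℂ) * (n+1) / 2)) := by
  have he : ∀ x : ℂ, p.eval x = ∑ m ∈ Finset.range (n+2), p.coeff m * x^m := fun x =>
    Polynomial.eval_eq_sum_range' (lt_of_le_of_lt hp (by omega)) x
  calc ∑ k ∈ Finset.range (n+1), (-1)^k * (n.choose k : ℂ) * p.eval (k:ℂ)
      = ∑ m ∈ Finset.range (n+2), p.coeff m * Sm n m := by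
        simp only [he, Finset.mul_sum]
        rw [Finset.sum_comm]
        unfold Sm
        refine Finset.sum_congr rfl fun m _ => ?_
        rw [Finset.mul_sum]
        exact Finset.sum_congr rfl fun k _ => by ring
    _ = _ := by
        rw [Finset.sum_range_succ, Finset.sum_range_succ,
          Finset.sum_eq_zero (fun m hm => by
            rw [Sm_lt n m (Finset.mem_range.mp hm), mul_zero]), zero_add,
          Sm_self, Sm_succ_self]
        ring

theorem melzak_deg_n_add_two (n : ℕ) (hn : 0 < n) (f : Polynomial ℂ)
    (hf : f.natDegree ≤ n + 2) (l : ℂ) (hl : ∀ k ∈ Finset.range (n + 1), l ≠ k) :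
    ∑ k ∈ Finset.range (n + 1), (n.choose k : ℂ) * (-1) ^ k * f.eval (k : ℂ) / ((k : ℂ) - l) =
      f.eval l * ∑ k ∈ Finset.range (n + 1), (n.choose k : ℂ) * (-1) ^ k / ((k : ℂ) - l) +
        (-1) ^ n * (n ! : ℂ) *
          (f.coeff (n + 1) + f.coeff (n + 2) * ((n * (n + 1) : ℂ) / 2 + l)) := by
  set g : Polynomial ℂ := f /ₘ (X - C l) with hg
  have hmonic : (X - C l).Monic := monic_X_sub_C l
  have hfeq : f = (X - C l) * g + C (f.eval l) := by
    conv_lhs => rw [← modByMonic_add_div f (X - C l)]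
    rw [modByMonic_X_sub_C_eq_C_eval]; ring
  have hgdeg : g.natDegree ≤ n + 1 := by
    rw [hg, natDegree_divByMonic f hmonic, natDegree_X_sub_C]
    omega
  -- coefficient relations
  have hcoeff : ∀ m : ℕ, f.coeff (m+1) = g.coeff m - l * g.coeff (m+1) := by
    intro m
    conv_lhs => rw [hfeq]
    rw [coeff_add, coeff_C, if_neg (by omega), add_zero, sub_mul, coeff_sub,
      coeff_X_mul, coeff_C_mul]
  have hg2 : g.coeff (n+2) = 0 := coeff_eq_zero_of_natDegree_lt (by omega)
  have hc2 : f.coeff (n+2) = g.coeff (n+1) := by rw [hcoeff (n+1), hg2, mul_zero, sub_zero]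
  have hc1 : f.coeff (n+1) = g.coeff n - l * g.coeff (n+1) := hcoeff n
  -- eval relation
  have hne : ∀ k ∈ Finset.range (n+1), (k:ℂ) - l ≠ 0 := fun k hk =>
    sub_ne_zero.mpr fun h => (hl k hk) h.symm
  have hsplit : ∀ k ∈ Finset.range (n+1),
      (n.choose k : ℂ) * (-1) ^ k * f.eval (k : ℂ) / ((k : ℂ) - l)
        = f.eval l * ((n.choose k : ℂ) * (-1) ^ k / ((k : ℂ) - l))
          + (-1)^k * (n.choose k : ℂ) * g.eval (k:ℂ) := by
    intro k hk
    have h := hne k hk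
    have : f.eval (k:ℂ) = ((k:ℂ) - l) * g.eval (k:ℂ) + f.eval l := by
      conv_lhs => rw [hfeq]
      simp
    rw [this]
    field_simp
    ring
  rw [Finset.sum_congr rfl hsplit, Finset.sum_add_distrib, ← Finset.mul_sum,
    key_sum n g hgdeg, hc1, hc2]
  ring
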